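/- Let s > 0, let P satisfy H1 and H2, fix x₀ > 0, and suppose L(P) := ∫_{x₀}^∞ 2 dz / ( z·(√(1 + 4·P(z)) − 1) ) < ∞. Then every positive solution γ of the Dyson–Schwinger ODE on [x₀, ∞) satisfies ∫_{x₀}^∞ dz / (s·z·γ(z)) < ∞; that is, if L(P) is finite then all global positive solutions, including the separatrix, are Landau poles. -/

import Mathlib

open Real MeasureTheory Filter Set

noncomputable section

/-- `γ` is a positive solution of the Dyson–Schwinger ODE
`γ'(x) = (γ(x) + γ(x)² − P(x)) / (s·x·γ(x))` on the set `I`. -/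
def IsDSSolution (s : ℝ) (P γ : ℝ → ℝ) (I : Set ℝ) : Prop :=
  (∀ x ∈ I, 0 < γ x) ∧
    ∀ x ∈ I, HasDerivWithinAt γ ((γ x + (γ x) ^ 2 - P x) / (s * x * γ x)) I x

/-- Hypothesis H1: `P` is twice continuously differentiable on `[0,∞)`,
`P 0 = 0`, and `P x > 0` for `x > 0`. -/
def H1 (P : ℝ → ℝ) : Prop :=
  ContDiffOn ℝ 2 P (Set.Ici 0) ∧ P 0 = 0 ∧ ∀ x > (0 : ℝ), 0 < P x

/-- Hypothesis H2: `P` is strictly increasing on `[0,∞)`. -/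
def H2 (P : ℝ → ℝ) : Prop := StrictMonoOn P (Set.Ici 0)

/-- The nullcline `γ_c(x) = (√(1 + 4 P x) − 1)/2`. -/
def gammaC (P : ℝ → ℝ) (x : ℝ) : ℝ := (Real.sqrt (1 + 4 * P x) - 1) / 2

lemma gammaC_pos {P : ℝ → ℝ} (hP1 : H1 P) {x : ℝ} (hx : 0 < x) : 0 < gammaC P x := by
  have hp := hP1.2.2 x hx
  have h1 : (1:ℝ) < Real.sqrt (1 + 4 * P x) := by
    rw [Real.lt_sqrt (by norm_num)]
    nlinarith
  unfold gammaC; linarith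

lemma gammaC_eq {P : ℝ → ℝ} {x : ℝ} (hx : 0 ≤ 1 + 4 * P x) :
    gammaC P x + (gammaC P x) ^ 2 = P x := by
  have h := Real.sq_sqrt hx
  unfold gammaC
  linear_combination h / 4

lemma gammaC_mono {P : ℝ → ℝ} (hP2 : H2 P) : MonotoneOn (gammaC P) (Set.Ici 0) := by
  intro x hx y hy hxy
  have := hP2.monotoneOn hx hy hxy
  unfold gammaC
  gcongr

/-- If the nullcline integral is finite then `P` is unbounded. -/
lemma P_unbounded (P : ℝ → ℝ) (hP1 : H1 P) (hP2 : H2 P) (x₀ : ℝ) (hx₀ : 0 < x₀)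
    (hL : MeasureTheory.IntegrableOn
      (fun z => 2 / (z * (Real.sqrt (1 + 4 * P z) - 1))) (Set.Ici x₀)) :
    ∀ M : ℝ, ∃ X, x₀ ≤ X ∧ M < P X := by
  intro M
  by_contra h
  push_neg at h
  -- P z ≤ M for all z ≥ x₀
  have hM0 : 0 < M := lt_of_lt_of_le (hP1.2.2 x₀ hx₀) (h x₀ le_rfl)
  set U : ℝ := Real.sqrt (1 + 4 * M) with hU
  have hU1 : (1:ℝ) < U := by
    rw [hU, Real.lt_sqrt (by norm_num)]; nlinarith
  have key : ∀ z ∈ Set.Ici x₀, 2 / (U - 1) * z⁻¹ ≤ 2 / (z * (Real.sqrt (1 + 4 * P z) - 1)) := by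
    intro z hz
    have hz0 : 0 < z := lt_of_lt_of_le hx₀ hz
    have hPz : 0 < P z := hP1.2.2 z hz0
    have h1 : (1:ℝ) < Real.sqrt (1 + 4 * P z) := by
      rw [Real.lt_sqrt (by norm_num)]; nlinarith
    have h2 : Real.sqrt (1 + 4 * P z) ≤ U := by
      rw [hU]; apply Real.sqrt_le_sqrt; have := h z hz; linarith
    have e1 : 2 / (U - 1) * z⁻¹ = 2 / (z * (U - 1)) := by
      field_simp
    rw [e1]
    apply div_le_div_of_nonneg_left (by norm_num) (mul_pos hz0 (by linarith))
    have : Real.sqrt (1 + 4 * P z) - 1 ≤ U - 1 := by linarith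
    exact mul_le_mul_of_nonneg_left this hz0.le
  have hint : MeasureTheory.IntegrableOn (fun z => 2 / (U - 1) * z⁻¹) (Set.Ici x₀) := by
    apply MeasureTheory.Integrable.mono' hL
    · exact (Measurable.const_mul measurable_inv _).aestronglyMeasurable
    · filter_upwards [MeasureTheory.ae_restrict_mem measurableSet_Ici] with z hz
      have hz0 : 0 < z := lt_of_lt_of_le hx₀ hz
      have h1 : 0 ≤ 2 / (U - 1) * z⁻¹ :=
        le_of_lt (mul_pos (div_pos (by norm_num) (by linarith)) (inv_pos.2 hz0))
      rw [Real.norm_eq_abs, abs_of_nonneg h1]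
      exact key z hz
  have : MeasureTheory.IntegrableOn (fun z : ℝ => z⁻¹) (Set.Ici x₀) := by
    have h2 : ((U - 1) / 2) * (2 / (U - 1)) = 1 := by
      field_simp
      exact div_self (by linarith)
    have := hint.const_mul ((U - 1) / 2)
    simpa [← mul_assoc, h2, one_mul, IntegrableOn] using this
  exact not_IntegrableOn_Ici_inv this

theorem stmt_17 (s : ℝ) (hs : 0 < s) (P : ℝ → ℝ) (hP1 : H1 P) (hP2 : H2 P)
    (x₀ : ℝ) (hx₀ : 0 < x₀)
    (hL : MeasureTheory.IntegrableOn
      (fun z => 2 / (z * (Real.sqrt (1 + 4 * P z) - 1))) (Set.Ici x₀)) :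
    ∀ γ : ℝ → ℝ, IsDSSolution s P γ (Set.Ici x₀) →
      MeasureTheory.IntegrableOn (fun z => 1 / (s * z * γ z)) (Set.Ici x₀) := by
  rintro γ ⟨hpos, hderiv⟩
  have hcont : ContinuousOn γ (Set.Ici x₀) := fun x hx => (hderiv x hx).continuousWithinAt
  have hDA : ∀ x, x₀ < x → HasDerivAt γ ((γ x + γ x ^ 2 - P x) / (s * x * γ x)) x := by
    intro x hx
    exact (hderiv x (le_of_lt hx)).hasDerivAt (Ici_mem_nhds hx)
  -- Main claim: every positive solution stays (weakly) above the nullcline.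
  have hge : ∀ x ∈ Set.Ici x₀, gammaC P x ≤ γ x := by
    by_contra hcon
    push_neg at hcon
    obtain ⟨x₁, hx₁, hlt1⟩ := hcon
    have hx₁0 : 0 < x₁ := lt_of_lt_of_le hx₀ hx₁
    set b := gammaC P x₁ with hb
    have hb0 : 0 < b := gammaC_pos hP1 hx₁0
    -- once below the nullcline, γ stays below the constant b
    have hbelow : ∀ x, x₁ ≤ x → γ x < b := by
      by_contra hc
      push_neg at hc
      obtain ⟨x₂', hx₂', hbx₂'⟩ := hc
      set T : Set ℝ := Set.Ici x₁ ∩ γ ⁻¹' (Set.Ici b) with hT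
      have hTne : T.Nonempty := ⟨x₂', hx₂', hbx₂'⟩
      have hTbdd : BddBelow T := ⟨x₁, fun y hy => hy.1⟩
      have hTclosed : IsClosed T :=
        ContinuousOn.preimage_isClosed_of_isClosed
          (hcont.mono (Set.Ici_subset_Ici.2 hx₁)) isClosed_Ici isClosed_Ici
      set x₂ := sInf T with hx2
      have hx₂T : x₂ ∈ T := hTclosed.csInf_mem hTne hTbdd
      have hx₂1 : x₁ ≤ x₂ := hx₂T.1
      have hγx₂ : b ≤ γ x₂ := hx₂T.2
      have hx₂ne : x₁ < x₂ := by
        rcases lt_or_eq_of_le hx₂1 with h | h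
        · exact h
        · exfalso; rw [← h] at hγx₂; exact absurd hγx₂ (not_le.2 hlt1)
      have hIco : ∀ x ∈ Set.Ico x₁ x₂, γ x < b := by
        intro x hx
        by_contra hge'
        push_neg at hge'
        exact absurd (csInf_le hTbdd ⟨hx.1, hge'⟩) (not_le.2 hx.2)
      have hanti : StrictAntiOn γ (Set.Icc x₁ x₂) := by
        apply strictAntiOn_of_deriv_neg (convex_Icc _ _)
          (hcont.mono (fun y hy => le_trans hx₁ hy.1))
        intro x hx
        rw [interior_Icc] at hx
        have hx0 : x₀ < x := lt_of_le_of_lt hx₁ hx.1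
        have hda := hDA x hx0
        rw [hda.deriv]
        have hγx : 0 < γ x := hpos x (le_of_lt hx0)
        have hγb : γ x < b := hIco x ⟨hx.1.le, hx.2⟩
        have hbc : b ≤ gammaC P x :=
          gammaC_mono hP2 (le_of_lt hx₁0) (le_of_lt (hx₀.trans hx0)) hx.1.le
        have hPx : 0 < P x := hP1.2.2 x (hx₀.trans hx0)
        have hgc : gammaC P x + (gammaC P x) ^ 2 = P x := gammaC_eq (by nlinarith)
        have hgcpos : 0 < gammaC P x := gammaC_pos hP1 (hx₀.trans hx0)
        have hnum : γ x + γ x ^ 2 - P x < 0 := by nlinarith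
        exact div_neg_of_neg_of_pos hnum
          (mul_pos (mul_pos hs (hx₀.trans hx0)) hγx)
      have h2 := hanti (Set.left_mem_Icc.2 hx₂ne.le) (Set.right_mem_Icc.2 hx₂ne.le) hx₂ne
      linarith
    -- P eventually exceeds b + b² + 1, forcing γ to become negative: contradiction
    obtain ⟨X, hXx₀, hXP⟩ := P_unbounded P hP1 hP2 x₀ hx₀ hL (b + b ^ 2 + 1)
    set X' := max X x₁ with hX'
    have hX'x₀ : x₀ ≤ X' := le_trans hXx₀ (le_max_left _ _)
    have hX'1 : x₁ ≤ X' := le_max_right _ _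
    have hX'0 : 0 < X' := lt_of_lt_of_le hx₀ hX'x₀
    have hPX' : ∀ x, X' ≤ x → b + b ^ 2 + 1 ≤ P x := by
      intro x hx
      have hX0 : (0:ℝ) ≤ X := le_of_lt (lt_of_lt_of_le hx₀ hXx₀)
      have hx0 : (0:ℝ) ≤ x := le_trans (le_of_lt hX'0) hx
      have := hP2.monotoneOn hX0 hx0 (le_trans (le_max_left _ _) hx)
      linarith
    set c : ℝ := 1 / (s * b) with hc
    have hcpos : 0 < c := div_pos one_pos (mul_pos hs hb0)
    set g : ℝ → ℝ := fun x => γ x + c * Real.log x with hg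
    have hganti : AntitoneOn g (Set.Ici X') := by
      apply antitoneOn_of_hasDerivWithinAt_nonpos (convex_Ici _)
        (f' := fun x => (γ x + γ x ^ 2 - P x) / (s * x * γ x) + c * x⁻¹)
      · apply ContinuousOn.add (hcont.mono (Set.Ici_subset_Ici.2 hX'x₀))
        apply ContinuousOn.mul continuousOn_const
        apply Real.continuousOn_log.mono
        intro y hy
        simp only [Set.mem_compl_iff, Set.mem_singleton_iff]
        exact ne_of_gt (lt_of_lt_of_le hX'0 hy)
      · intro x hx
        rw [interior_Ici] at hx
        have hx0 : 0 < x := lt_of_le_of_lt hX'0.le hx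
        have hda : HasDerivAt g ((γ x + γ x ^ 2 - P x) / (s * x * γ x) + c * x⁻¹) x := by
          exact (hDA x (lt_of_le_of_lt hX'x₀ hx)).add
            ((Real.hasDerivAt_log (ne_of_gt hx0)).const_mul c)
        exact hda.hasDerivWithinAt
      · intro x hx
        rw [interior_Ici] at hx
        have hx0 : 0 < x := lt_of_le_of_lt hX'0.le hx
        have hγx : 0 < γ x := hpos x (le_trans hX'x₀ hx.le)
        have hγb : γ x < b := hbelow x (le_trans hX'1 hx.le)
        have hPx : b + b ^ 2 + 1 ≤ P x := hPX' x hx.le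
        have hN : γ x + γ x ^ 2 - P x ≤ -1 := by nlinarith
        have hd : 0 < s * x * γ x := mul_pos (mul_pos hs hx0) hγx
        have hdb : s * x * γ x ≤ s * b * x := by nlinarith
        have h1 : (γ x + γ x ^ 2 - P x) / (s * x * γ x) ≤ (-1) / (s * x * γ x) :=
          (div_le_div_iff_of_pos_right hd).2 hN
        have h2 : (-1 : ℝ) / (s * x * γ x) ≤ (-1) / (s * b * x) := by
          rw [neg_div, neg_div, neg_le_neg_iff]
          exact one_div_le_one_div_of_le hd hdb
        have h3 : c * x⁻¹ = 1 / (s * b * x) := by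
          rw [hc]
          field_simp
        rw [h3]
        have : (-1 : ℝ) / (s * b * x) + 1 / (s * b * x) = 0 := by ring
        linarith
    -- choose Y large enough that γ Y < 0
    set Y := max X' (Real.exp (s * b * g X')) + 1 with hY
    have hY1 : X' < Y := lt_of_le_of_lt (le_max_left _ _) (lt_add_one _)
    have hY2 : Real.exp (s * b * g X') < Y := lt_of_le_of_lt (le_max_right _ _) (lt_add_one _)
    have hY0 : 0 < Y := lt_trans hX'0 hY1
    have hlogY : s * b * g X' < Real.log Y := (Real.lt_log_iff_exp_lt hY0).2 hY2
    have hgY : g Y ≤ g X' := hganti (Set.self_mem_Ici) (le_of_lt hY1) (le_of_lt hY1)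
    have hclog : c * (s * b * g X') = g X' := by
      rw [hc]
      field_simp
    have hγY : γ Y < 0 := by
      have h4 : c * (s * b * g X') < c * Real.log Y := by
        exact mul_lt_mul_of_pos_left hlogY hcpos
      have h5 : γ Y = g Y - c * Real.log Y := by simp [hg]
      rw [h5]
      rw [hclog] at h4
      linarith
    exact absurd (hpos Y (le_trans hX'x₀ hY1.le)) (not_lt.2 hγY.le)
  -- Comparison with the nullcline integral
  apply MeasureTheory.Integrable.mono' (hL.const_mul (1 / s))
  · apply ContinuousOn.aestronglyMeasurable _ measurableSet_Ici
    apply ContinuousOn.div continuousOn_const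
    · exact ((continuousOn_const.mul continuousOn_id).mul hcont)
    · intro z hz
      have hz0 : 0 < z := lt_of_lt_of_le hx₀ hz
      have := hpos z hz
      positivity
  · filter_upwards [MeasureTheory.ae_restrict_mem measurableSet_Ici] with z hz
    have hz0 : 0 < z := lt_of_lt_of_le hx₀ hz
    have hγz : 0 < γ z := hpos z hz
    have hgcz : 0 < gammaC P z := gammaC_pos hP1 hz0
    have hgez : gammaC P z ≤ γ z := hge z hz
    have hsq1 : (1:ℝ) < Real.sqrt (1 + 4 * P z) := by
      have := hP1.2.2 z hz0
      rw [Real.lt_sqrt (by norm_num)]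
      nlinarith
    have e : 1 / s * (2 / (z * (Real.sqrt (1 + 4 * P z) - 1)))
        = 1 / (s * z * gammaC P z) := by
      simp only [gammaC]
      have hu : Real.sqrt (1 + 4 * P z) - 1 ≠ 0 := ne_of_gt (by linarith)
      field_simp
    have hb1 : 1 / (s * z * γ z) ≤ 1 / (s * z * gammaC P z) := by
      apply one_div_le_one_div_of_le (by positivity)
      exact mul_le_mul_of_nonneg_left hgez (by positivity)
    rw [Real.norm_eq_abs, abs_of_nonneg (by positivity)]
    rw [e]
    exact hb1
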